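/- Let E be a real Banach space and let Ω be a closed, convex, bounded subset of E which is equal to the closed convex hull of its set of extreme points ex Ω. Then for every x ∈ Ω there is a sequence (x_n)_{n≥1} of points of ex Ω which is Cesàro summable to x, i.e. (x_1+⋯+x_N)/N converges in norm to x as N → ∞. -/

import Mathlib

open Filter Finset

set_option maxHeartbeats 3200000

section helpers
variable {E : Type*} [NormedAddCommGroup E] [NormedSpace ℝ E]

lemma per_sum_mul {M : Type*} [AddCommMonoid M] (g : ℕ → M) (D : ℕ) (q : ℕ) :
    ∑ i ∈ range (q * D), g (i % D) = q • (∑ i ∈ range D, g i) := by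
  induction q with
  | zero => simp
  | succ q ih =>
    rw [Nat.succ_mul, sum_range_add, ih, succ_nsmul]
    congr 1
    refine Finset.sum_congr rfl fun j hj => ?_
    rw [add_comm, Nat.add_mul_mod_self_right, Nat.mod_eq_of_lt (mem_range.mp hj)]

lemma per_sum {M : Type*} [AddCommMonoid M] (g : ℕ → M) (D t : ℕ) (hD : 0 < D) :
    ∑ i ∈ range t, g (i % D) = (t / D) • (∑ i ∈ range D, g i) + ∑ i ∈ range (t % D), g i := by
  conv_lhs => rw [← Nat.div_add_mod t D, Nat.mul_comm]
  rw [sum_range_add, per_sum_mul]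
  congr 1
  refine Finset.sum_congr rfl fun j hj => ?_
  rw [add_comm, Nat.add_mul_mod_self_right,
    Nat.mod_eq_of_lt (lt_trans (mem_range.mp hj) (Nat.mod_lt t hD))]

end helpers

def avgSet {E : Type*} [NormedAddCommGroup E] [NormedSpace ℝ E] (S : Set E) : Set E :=
  {y | ∃ n : ℕ, 0 < n ∧ ∃ g : ℕ → E, (∀ i, g i ∈ S) ∧
    y = (n : ℝ)⁻¹ • ∑ i ∈ range n, g i}

lemma avgSet_comb {E : Type*} [NormedAddCommGroup E] [NormedSpace ℝ E] {S : Set E}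
    {u v : E} (hu : u ∈ avgSet S) (hv : v ∈ avgSet S) (a b : ℕ) (hab : 0 < a + b) :
    ((a : ℝ)/(a + b)) • u + ((b : ℝ)/(a + b)) • v ∈ avgSet S := by
  obtain ⟨n, hn, g, hg, rfl⟩ := hu
  obtain ⟨m, hm, h, hh, rfl⟩ := hv
  refine ⟨(a + b) * m * n, by positivity, fun i => if i < a * m * n then g (i % n)
    else h ((i - a * m * n) % m), fun i => by dsimp only; split <;> [exact hg _; exact hh _], ?_⟩
  have key : ∑ i ∈ range ((a + b) * m * n),
      (if i < a * m * n then g (i % n) else h ((i - a * m * n) % m))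
      = (a * m) • (∑ i ∈ range n, g i) + (b * n) • (∑ i ∈ range m, h i) := by
    rw [show (a + b) * m * n = a * m * n + b * n * m by ring, sum_range_add]
    congr 1
    · rw [← per_sum_mul g n (a * m)]
      exact Finset.sum_congr rfl fun j hj => by rw [if_pos (mem_range.mp hj)]
    · rw [← per_sum_mul h m (b * n)]
      refine Finset.sum_congr rfl fun j hj => ?_
      rw [if_neg (by omega), Nat.add_sub_cancel_left]
  rw [key]
  have hn' : (n : ℝ) ≠ 0 := Nat.cast_ne_zero.mpr hn.ne'
  have hm' : (m : ℝ) ≠ 0 := Nat.cast_ne_zero.mpr hm.ne'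
  have hab' : ((a : ℝ) + b) ≠ 0 := by
    have : (0:ℝ) < a + b := by exact_mod_cast hab
    linarith
  rw [← Nat.cast_smul_eq_nsmul ℝ (a*m), ← Nat.cast_smul_eq_nsmul ℝ (b*n), smul_add,
    smul_smul, smul_smul, smul_smul, smul_smul]
  congr 1 <;> · congr 1; push_cast; field_simp

set_option maxHeartbeats 800000 in
lemma avgSet_closure_convex {E : Type*} [NormedAddCommGroup E] [NormedSpace ℝ E] {S : Set E}
    {M : ℝ} (hb : ∀ y ∈ avgSet S, ‖y‖ ≤ M) :
    Convex ℝ (closure (avgSet S)) := by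
  intro u hu v hv s t hs ht hst
  rw [Metric.mem_closure_iff] at hu hv ⊢
  intro ε hε
  obtain ⟨u', hu', hdu⟩ := hu (ε/4) (by linarith)
  obtain ⟨v', hv', hdv⟩ := hv (ε/4) (by linarith)
  have hM : 0 ≤ M := le_trans (norm_nonneg u') (hb u' hu')
  obtain ⟨Q, hQ⟩ := exists_nat_gt (8 * (M + 1) / ε)
  have hQpos : 0 < Q := by
    by_contra hc
    push_neg at hc
    interval_cases Q
    · simp at hQ
      nlinarith [div_pos (by linarith : (0:ℝ) < 8 * (M+1)) hε]
  have hQR : (0:ℝ) < Q := by exact_mod_cast hQpos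
  set a : ℕ := ⌊s * Q⌋₊ with ha
  have hs1 : s ≤ 1 := by linarith
  have haQR : (a : ℝ) ≤ s * Q := Nat.floor_le (by positivity)
  have haQ : a ≤ Q := by
    have : (a : ℝ) ≤ (Q : ℝ) := le_trans haQR (by nlinarith)
    exact_mod_cast this
  have hlow : s * Q - 1 < a := Nat.sub_one_lt_floor _
  set b : ℕ := Q - a with hbdef
  have hbQ : (b : ℝ) = Q - a := by
    rw [hbdef, Nat.cast_sub haQ]
  have habQ : a + b = Q := by omega
  have hsa : |s - (a : ℝ)/Q| ≤ 1/Q := by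
    have e : s - (a:ℝ)/Q = (s * Q - a)/Q := by field_simp
    rw [e, abs_div, abs_of_pos hQR]
    gcongr
    rw [abs_le]
    constructor <;> linarith
  have htb : |t - (b : ℝ)/Q| ≤ 1/Q := by
    have e2 : t - (b:ℝ)/Q = -(s - (a:ℝ)/Q) := by
      have hs' : s = 1 - t := by linarith
      rw [hbQ, hs']
      field_simp
      ring
    rw [e2, abs_neg]
    exact hsa
  refine ⟨((a:ℝ)/(a+b)) • u' + ((b:ℝ)/(a+b)) • v', avgSet_comb hu' hv' a b (by omega), ?_⟩
  have hcast : ((a:ℝ) + b) = Q := by rw [hbQ]; ring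
  rw [dist_eq_norm]
  have hdec : s • u + t • v - (((a:ℝ)/(a+b)) • u' + ((b:ℝ)/(a+b)) • v')
      = s • (u - u') + t • (v - v') + (s - (a:ℝ)/Q) • u' + (t - (b:ℝ)/Q) • v' := by
    rw [hcast]
    module
  rw [hdec]
  have h1 : ‖s • (u - u')‖ ≤ s * (ε/4) := by
    rw [norm_smul, Real.norm_of_nonneg hs]
    have := le_of_lt hdu
    rw [dist_eq_norm] at this
    nlinarith
  have h2 : ‖t • (v - v')‖ ≤ t * (ε/4) := by
    rw [norm_smul, Real.norm_of_nonneg ht]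
    have := le_of_lt hdv
    rw [dist_eq_norm] at this
    nlinarith
  have h3 : ‖(s - (a:ℝ)/Q) • u'‖ ≤ (1/Q) * M := by
    rw [norm_smul, Real.norm_eq_abs]
    exact mul_le_mul hsa (hb _ hu') (norm_nonneg _) (by positivity)
  have h4 : ‖(t - (b:ℝ)/Q) • v'‖ ≤ (1/Q) * M := by
    rw [norm_smul, Real.norm_eq_abs]
    exact mul_le_mul htb (hb _ hv') (norm_nonneg _) (by positivity)
  have hQM : (1/Q) * M < ε / 8 := by
    have h8 : 8 * (M + 1) < ε * Q := by
      rw [div_lt_iff₀ hε] at hQ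
      linarith
    rw [show (1/(Q:ℝ)) * M = M / Q by ring, div_lt_iff₀ hQR]
    nlinarith
  calc ‖s • (u - u') + t • (v - v') + (s - (a:ℝ)/Q) • u' + (t - (b:ℝ)/Q) • v'‖
      ≤ ‖s • (u - u') + t • (v - v') + (s - (a:ℝ)/Q) • u'‖ + ‖(t - (b:ℝ)/Q) • v'‖ :=
        norm_add_le _ _
    _ ≤ (‖s • (u - u') + t • (v - v')‖ + ‖(s - (a:ℝ)/Q) • u'‖) + ‖(t - (b:ℝ)/Q) • v'‖ := by
        gcongr
        exact norm_add_le _ _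
    _ ≤ ((‖s • (u - u')‖ + ‖t • (v - v')‖) + ‖(s - (a:ℝ)/Q) • u'‖) + ‖(t - (b:ℝ)/Q) • v'‖ := by
        gcongr
        exact norm_add_le _ _
    _ ≤ (s * (ε/4) + t * (ε/4) + (1/Q)*M) + (1/Q)*M := by gcongr
    _ < ε := by nlinarith



/-- Let `Ω` be a closed convex bounded subset of a real
Banach space `E` which equals the closed convex hull of its set of extreme
points.  Then every `x ∈ Ω` is the Cesàro limit of a sequence of extreme
points of `Ω`. -/
theorem stmt6 {E : Type*} [NormedAddCommGroup E] [NormedSpace ℝ E] [CompleteSpace E]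
    (Ω : Set E) (hclosed : IsClosed Ω) (hconv : Convex ℝ Ω)
    (hbdd : Bornology.IsBounded Ω)
    (hKM : Ω = closure (convexHull ℝ (Ω.extremePoints ℝ))) :
    ∀ x ∈ Ω, ∃ seq : ℕ → E, (∀ n, seq n ∈ Ω.extremePoints ℝ) ∧
      Tendsto (fun N : ℕ => (N : ℝ)⁻¹ • (∑ k ∈ Finset.range N, seq k))
        atTop (nhds x) := by
  intro x hx
  obtain ⟨M0, hM0⟩ := hbdd.exists_norm_le
  set M : ℝ := max M0 0 with hMdef
  have hM0' : (0:ℝ) ≤ M := le_max_right _ _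
  have hMb : ∀ y ∈ Ω, ‖y‖ ≤ M := fun y hy => (hM0 y hy).trans (le_max_left _ _)
  have hexsub : Ω.extremePoints ℝ ⊆ Ω := extremePoints_subset
  -- the approximation step
  have happrox : ∀ k : ℕ, ∃ D : ℕ, 0 < D ∧ ∃ g : ℕ → E,
      (∀ i, g i ∈ Ω.extremePoints ℝ) ∧
      ‖(D:ℝ)⁻¹ • ∑ i ∈ range D, g i - x‖ < 1/(k+1) := by
    have hsubA : avgSet (Ω.extremePoints ℝ) ⊆ Ω := by
      rintro z ⟨n, hn, g, hg, rfl⟩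
      rw [smul_sum]
      have hcard : ∑ _i ∈ range n, (n : ℝ)⁻¹ = 1 := by
        rw [sum_const, card_range, nsmul_eq_mul, mul_inv_cancel₀ (by exact_mod_cast hn.ne')]
      exact hconv.sum_mem (fun i _ => by positivity) hcard (fun i _ => hexsub (hg i))
    have hconvA : Convex ℝ (closure (avgSet (Ω.extremePoints ℝ))) :=
      avgSet_closure_convex (M := M) (fun z hz => hMb z (hsubA hz))
    have hexA : Ω.extremePoints ℝ ⊆ avgSet (Ω.extremePoints ℝ) := by
      intro e he
      exact ⟨1, one_pos, fun _ => e, fun _ => he, by simp⟩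
    have hhull : convexHull ℝ (Ω.extremePoints ℝ) ⊆ closure (avgSet (Ω.extremePoints ℝ)) :=
      convexHull_min (hexA.trans subset_closure) hconvA
    have hxcl : x ∈ closure (avgSet (Ω.extremePoints ℝ)) := by
      have h2 := closure_mono hhull
      rw [closure_closure] at h2
      exact h2 (hKM ▸ hx)
    intro k
    rw [Metric.mem_closure_iff] at hxcl
    obtain ⟨z, ⟨n, hn, g, hg, rfl⟩, hdist⟩ := hxcl (1/(k+1)) (by positivity)
    rw [dist_comm, dist_eq_norm] at hdist
    exact ⟨n, hn, g, hg, hdist⟩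
  choose D hD g0 hg0 herr using happrox
  set C : ℕ := ⌈M⌉₊ + 1 with hCdef
  have hC : 0 < C := Nat.succ_pos _
  have hMC : M ≤ (C:ℝ) := by
    have := Nat.le_ceil M
    rw [hCdef]
    push_cast
    linarith
  set L : ℕ → ℕ := fun k => ((k+1) * D (k+1) * C) * D k with hLdef
  have hL1 : ∀ k, 0 < L k := fun k =>
    Nat.mul_pos (Nat.mul_pos (Nat.mul_pos k.succ_pos (hD _)) hC) (hD _)
  set S : ℕ → ℕ := fun k => ∑ j ∈ range k, L j with hSdef
  have hSsucc : ∀ k, S (k+1) = S k + L k := fun k => sum_range_succ L k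
  have hSmono : StrictMono S := strictMono_nat_of_lt_succ fun k => by
    rw [hSsucc]; have := hL1 k; omega
  have hSk : ∀ k, k ≤ S k := fun k => hSmono.le_apply
  set B : ℕ → ℕ := fun n => Nat.findGreatest (fun k => S k ≤ n) n with hBdef
  have hB1 : ∀ n, S (B n) ≤ n := by
    intro n
    have h0 : S 0 ≤ n := by simp [hSdef]
    exact Nat.findGreatest_spec (P := fun k => S k ≤ n) (Nat.zero_le n) h0
  have hB2 : ∀ n, n < S (B n + 1) := by
    intro n
    by_cases hc : B n + 1 ≤ n
    · have h := Nat.findGreatest_is_greatest (lt_add_one (B n)) hc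
      omega
    · have := hSk (B n + 1)
      omega
  have hBu : ∀ k n, S k ≤ n → n < S (k+1) → B n = k := by
    intro k n h1 h2
    have a := hB1 n; have b := hB2 n
    rcases lt_trichotomy (B n) k with h|h|h
    · have : S (B n + 1) ≤ S k := hSmono.monotone (by omega)
      omega
    · exact h
    · have : S (k+1) ≤ S (B n) := hSmono.monotone (by omega)
      omega
  set seq : ℕ → E := fun n => g0 (B n) ((n - S (B n)) % D (B n)) with hseqdef
  refine ⟨seq, fun n => hg0 _ _, ?_⟩
  set σ : ℕ → E := fun k => ∑ i ∈ range (D k), g0 k i with hσdef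
  set y : ℕ → E := fun k => (D k : ℝ)⁻¹ • σ k with hydef
  have hyx : ∀ k, ‖y k - x‖ < 1/(k+1) := herr
  have hyΩ : ∀ k, y k ∈ Ω := by
    intro k
    rw [hydef]
    dsimp only
    rw [smul_sum]
    have hcard : ∑ _i ∈ range (D k), (D k : ℝ)⁻¹ = 1 := by
      rw [sum_const, card_range, nsmul_eq_mul, mul_inv_cancel₀ (by exact_mod_cast (hD k).ne')]
    exact hconv.sum_mem (fun i _ => by positivity) hcard
      (fun i _ => hexsub (hg0 k i))
  -- partial sums within a block
  have hsum : ∀ k, ∀ t ≤ L k, ∑ i ∈ range (S k + t), seq i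
      = (∑ i ∈ range (S k), seq i) + ((t / D k) • σ k + ∑ i ∈ range (t % D k), g0 k i) := by
    intro k t ht
    rw [sum_range_add]
    congr 1
    have hc : ∀ j ∈ range t, seq (S k + j) = g0 k (j % D k) := by
      intro j hj
      have hjt : j < t := mem_range.mp hj
      have hBj : B (S k + j) = k := by
        refine hBu k _ (Nat.le_add_right _ _) ?_
        rw [hSsucc]
        omega
      rw [hseqdef]
      dsimp only
      rw [hBj, Nat.add_sub_cancel_left]
    rw [Finset.sum_congr rfl hc]
    exact per_sum (g0 k) (D k) t (hD k)
  -- prefix sums at block boundaries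
  have hTS : ∀ k, ∑ i ∈ range (S k), seq i = ∑ j ∈ range k, ((j+1) * D (j+1) * C) • σ j := by
    intro k
    induction k with
    | zero => simp [hSdef]
    | succ k ih =>
      rw [hSsucc, hsum k (L k) le_rfl, ih, sum_range_succ]
      congr 1
      have hdiv : L k / D k = (k+1) * D (k+1) * C := by
        rw [hLdef]
        exact Nat.mul_div_cancel _ (hD k)
      have hmod : L k % D k = 0 := by
        rw [hLdef]
        exact Nat.mul_mod_left _ _
      rw [hdiv, hmod]
      simp
  -- main error estimate
  have key : ∀ N : ℕ, 0 < N →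
      ‖(N:ℝ)⁻¹ • (∑ i ∈ range N, seq i) - x‖ ≤
        (N:ℝ)⁻¹ * (∑ j ∈ range (B N), (L j : ℝ) * (1/(j+1)))
          + 1/(B N + 1) + (N:ℝ)⁻¹ * (D (B N) * (2*M)) := by
    intro N hN
    have hNR : (0:ℝ) < N := by exact_mod_cast hN
    set k := B N with hk
    have h1 : S k ≤ N := hB1 N
    have h2 : N < S k + L k := by have := hB2 N; rwa [hSsucc] at this
    set t := N - S k with htdef
    have hNt : N = S k + t := by omega
    have htL : t ≤ L k := by omega
    set q := t / D k with hq
    set r := t % D k with hr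
    have hrD : r < D k := Nat.mod_lt _ (hD k)
    have htqr : D k * q + r = t := Nat.div_add_mod t (D k)
    have hT : ∑ i ∈ range N, seq i
        = ∑ j ∈ range k, ((j+1) * D (j+1) * C) • σ j + (q • σ k + ∑ i ∈ range r, g0 k i) := by
      conv_lhs => rw [hNt]
      rw [hsum k t htL, hTS k]
    set ρ := ∑ i ∈ range r, g0 k i with hρ
    have hDj : ∀ j, ((D j : ℝ)) ≠ 0 := fun j => by exact_mod_cast (hD j).ne'
    have huse : ∀ j, ((j+1) * D (j+1) * C) • σ j = ((L j : ℝ)) • y j := by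
      intro j
      have e1 : ((L j : ℝ)) • y j = (((j+1) * D (j+1) * C : ℕ) : ℝ) • σ j := by
        rw [hydef]
        dsimp only
        rw [smul_smul, hLdef]
        dsimp only
        congr 1
        push_cast
        field_simp
        rw [mul_div_assoc, div_self (hDj j), mul_one]
      rw [e1, Nat.cast_smul_eq_nsmul]
    have hq' : q • σ k = ((q * D k : ℕ) : ℝ) • y k := by
      have e1 : ((q * D k : ℕ) : ℝ) • y k = ((q : ℕ) : ℝ) • σ k := by
        rw [hydef]
        dsimp only
        rw [smul_smul]
        congr 1
        push_cast
        field_simp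
        rw [mul_div_assoc, div_self (hDj k), mul_one]
      rw [e1, Nat.cast_smul_eq_nsmul]
    have hNsum : (N:ℝ) = ∑ j ∈ range k, (L j : ℝ) + (((q * D k : ℕ)):ℝ) + (r:ℝ) := by
      have e2 : N = (∑ j ∈ range k, L j) + (q * D k + r) := by
        rw [hNt, hSdef]
        congr 1
        rw [mul_comm]
        omega
      rw [e2]
      push_cast [Nat.cast_sum]
      ring
    have hdecomp : ∑ i ∈ range N, seq i - (N:ℝ) • x
        = (∑ j ∈ range k, (L j:ℝ) • (y j - x)) + ((q * D k:ℕ):ℝ) • (y k - x)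
          + (ρ - (r:ℝ) • x) := by
      rw [hT, Finset.sum_congr rfl (fun j _ => huse j), hq', hNsum, add_smul, add_smul,
        Finset.sum_smul]
      simp only [smul_sub]
      rw [Finset.sum_sub_distrib]
      abel
    have b1 : ‖∑ j ∈ range k, (L j:ℝ) • (y j - x)‖ ≤ ∑ j ∈ range k, (L j:ℝ) * (1/(j+1)) := by
      refine (norm_sum_le _ _).trans (Finset.sum_le_sum fun j _ => ?_)
      rw [norm_smul, Real.norm_of_nonneg (by positivity)]
      exact mul_le_mul_of_nonneg_left (le_of_lt (hyx j)) (by positivity)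
    have b2 : ‖((q * D k:ℕ):ℝ) • (y k - x)‖ ≤ (N:ℝ) * (1/(k+1)) := by
      rw [norm_smul, Real.norm_of_nonneg (by positivity)]
      have hqd : ((q * D k : ℕ):ℝ) ≤ (N:ℝ) := by
        have h3 : q * D k ≤ N := by
          rw [mul_comm]
          omega
        exact_mod_cast h3
      exact mul_le_mul hqd (le_of_lt (hyx k)) (norm_nonneg _) (by positivity)
    have b3 : ‖ρ - (r:ℝ) • x‖ ≤ (D k:ℝ) * (2*M) := by
      have hρn : ‖ρ‖ ≤ (r:ℝ) * M := by
        rw [hρ]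
        refine (norm_sum_le _ _).trans ?_
        calc ∑ i ∈ range r, ‖g0 k i‖ ≤ ∑ _i ∈ range r, M :=
              Finset.sum_le_sum (fun i _ => hMb _ (hexsub (hg0 k i)))
          _ = r * M := by rw [sum_const, card_range, nsmul_eq_mul]
      have hxn : ‖(r:ℝ) • x‖ ≤ (r:ℝ) * M := by
        rw [norm_smul, Real.norm_of_nonneg (by positivity)]
        exact mul_le_mul_of_nonneg_left (hMb x hx) (by positivity)
      have hrle : (r:ℝ) ≤ (D k : ℝ) := by exact_mod_cast hrD.le
      have hrpos : (0:ℝ) ≤ r := by positivity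
      calc ‖ρ - (r:ℝ) • x‖ ≤ ‖ρ‖ + ‖(r:ℝ) • x‖ := norm_sub_le _ _
        _ ≤ (r:ℝ)*M + (r:ℝ)*M := add_le_add hρn hxn
        _ ≤ (D k:ℝ) * (2*M) := by nlinarith
    have hnormT : ‖∑ i ∈ range N, seq i - (N:ℝ) • x‖
        ≤ (∑ j ∈ range k, (L j:ℝ) * (1/(j+1))) + (N:ℝ) * (1/(k+1)) + (D k:ℝ) * (2*M) := by
      rw [hdecomp]
      calc ‖(∑ j ∈ range k, (L j:ℝ) • (y j - x)) + ((q * D k:ℕ):ℝ) • (y k - x)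
            + (ρ - (r:ℝ) • x)‖
          ≤ ‖(∑ j ∈ range k, (L j:ℝ) • (y j - x)) + ((q * D k:ℕ):ℝ) • (y k - x)‖
            + ‖ρ - (r:ℝ) • x‖ := norm_add_le _ _
        _ ≤ (‖∑ j ∈ range k, (L j:ℝ) • (y j - x)‖ + ‖((q * D k:ℕ):ℝ) • (y k - x)‖)
            + ‖ρ - (r:ℝ) • x‖ := by gcongr; exact norm_add_le _ _
        _ ≤ (∑ j ∈ range k, (L j:ℝ) * (1/(j+1))) + (N:ℝ) * (1/(k+1)) + (D k:ℝ) * (2*M) := by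
            gcongr
    have heq : ‖(N:ℝ)⁻¹ • (∑ i ∈ range N, seq i) - x‖
        = (N:ℝ)⁻¹ * ‖∑ i ∈ range N, seq i - (N:ℝ) • x‖ := by
      rw [show (N:ℝ)⁻¹ • (∑ i ∈ range N, seq i) - x
          = (N:ℝ)⁻¹ • (∑ i ∈ range N, seq i - (N:ℝ) • x) by
        rw [smul_sub, inv_smul_smul₀ hNR.ne']]
      rw [norm_smul, Real.norm_of_nonneg (by positivity)]
    rw [heq]
    calc (N:ℝ)⁻¹ * ‖∑ i ∈ range N, seq i - (N:ℝ) • x‖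
        ≤ (N:ℝ)⁻¹ * ((∑ j ∈ range k, (L j:ℝ) * (1/(j+1))) + (N:ℝ) * (1/(k+1))
          + (D k:ℝ) * (2*M)) := mul_le_mul_of_nonneg_left hnormT (by positivity)
      _ = (N:ℝ)⁻¹ * (∑ j ∈ range k, (L j : ℝ) * (1/(j+1)))
          + 1/(k + 1) + (N:ℝ)⁻¹ * (D k * (2*M)) := by
          rw [mul_add, mul_add, ← mul_assoc, inv_mul_cancel₀ hNR.ne', one_mul]
  -- conclude
  rw [Metric.tendsto_atTop]
  intro ε hε
  obtain ⟨K, hK⟩ := exists_nat_gt (8/ε)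
  have hεK : 1/((K:ℝ)+1) < ε/8 := by
    rw [div_lt_iff₀ (by positivity)]
    rw [div_lt_iff₀ hε] at hK
    nlinarith
  obtain ⟨N₁, hN₁⟩ := exists_nat_gt (8 * ((S (K+1) : ℝ) + 1)/ε)
  refine ⟨max N₁ (S (K+2)) + 1, fun N hNN => ?_⟩
  have hN : 0 < N := by omega
  have hNR : (0:ℝ) < N := by exact_mod_cast hN
  have hNS : S (K+2) < N := by
    have := le_max_right N₁ (S (K+2))
    omega
  have hNN₁ : N₁ < N := by
    have := le_max_left N₁ (S (K+2))
    omega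
  set k := B N with hk
  have hkK : K + 2 ≤ k := by
    by_contra hcon
    push_neg at hcon
    have h10 : S (k+1) ≤ S (K+2) := hSmono.monotone (by omega)
    have h11 := hB2 N
    rw [← hk] at h11
    omega
  have hkKR : ((K:ℝ)+2) ≤ (k:ℝ) := by exact_mod_cast (show (K+2:ℕ) ≤ k from hkK)
  rw [dist_eq_norm]
  refine lt_of_le_of_lt (key N hN) ?_
  have hDk1 : (1:ℝ) ≤ D k := by exact_mod_cast (hD k)
  have hC1 : (1:ℝ) ≤ C := by exact_mod_cast hC
  -- term 2
  have hterm2 : 1/((B N : ℝ) + 1) < ε/8 := by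
    refine lt_of_le_of_lt ?_ hεK
    rw [← hk]
    exact one_div_le_one_div_of_le (by positivity) (by linarith)
  -- term 3
  have hNgek : ((k:ℝ) * (D k) * C) ≤ N := by
    obtain ⟨k', hk'⟩ : ∃ k', k = k' + 1 := ⟨k-1, by omega⟩
    have hmem : k' ∈ range k := mem_range.mpr (by omega)
    have hL1k : L k' ≤ S k := by
      rw [hSdef]
      exact Finset.single_le_sum (f := fun j => L j) (fun i _ => Nat.zero_le _) hmem
    have hLval : L k' = (k' + 1) * D (k'+1) * C * D k' := by rw [hLdef]
    have h6 : (k'+1) * D (k'+1) * C ≤ L k' := by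
      rw [hLval]
      calc (k'+1) * D (k'+1) * C = (k'+1) * D (k'+1) * C * 1 := by ring
        _ ≤ (k'+1) * D (k'+1) * C * D k' := Nat.mul_le_mul_left _ (hD k')
    have h7 : S k ≤ N := hB1 N
    have h8 : (k'+1) * D (k'+1) * C ≤ N := by omega
    calc ((k:ℝ) * (D k) * C) = (((k'+1) * D (k'+1) * C : ℕ) : ℝ) := by
          rw [hk']
          push_cast
          ring
      _ ≤ (N:ℝ) := by exact_mod_cast h8
  have hterm3 : (N:ℝ)⁻¹ * ((D k : ℝ) * (2*M)) ≤ 2/(k:ℝ) := by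
    have hkpos : (0:ℝ) < k := by linarith
    calc (N:ℝ)⁻¹ * ((D k : ℝ) * (2*M))
        ≤ ((k:ℝ) * (D k) * C)⁻¹ * ((D k : ℝ) * (2*C)) := by
          refine mul_le_mul (inv_anti₀ (by positivity) hNgek) ?_
            (by positivity) (by positivity)
          have h14 : (0:ℝ) ≤ (D k : ℝ) := Nat.cast_nonneg _
          nlinarith
      _ = 2/(k:ℝ) := by
          field_simp
  have hterm3' : 2/(k:ℝ) < ε/4 := by
    rw [div_lt_iff₀ (by linarith)]
    rw [div_lt_iff₀ (by positivity)] at hεK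
    nlinarith
  -- term 1
  have hsplit : ∑ j ∈ range k, (L j : ℝ) * (1/(j+1))
      = ∑ j ∈ range (K+1), (L j : ℝ) * (1/(j+1))
        + ∑ j ∈ Finset.Ico (K+1) k, (L j : ℝ) * (1/(j+1)) := by
    rw [range_eq_Ico, ← Finset.sum_Ico_consecutive _ (Nat.zero_le (K+1)) (by omega),
      ← range_eq_Ico]
  have hpart1 : ∑ j ∈ range (K+1), (L j : ℝ) * (1/(j+1)) ≤ (S (K+1) : ℝ) := by
    have : ∑ j ∈ range (K+1), (L j : ℝ) * (1/(j+1)) ≤ ∑ j ∈ range (K+1), (L j : ℝ) := by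
      refine Finset.sum_le_sum fun j _ => ?_
      have hj1 : (0:ℝ) < (j:ℝ)+1 := by positivity
      have : (1:ℝ)/((j:ℝ)+1) ≤ 1 := by
        rw [div_le_one hj1]
        linarith
      nlinarith [Nat.cast_nonneg (α := ℝ) (L j)]
    refine this.trans (le_of_eq ?_)
    rw [hSdef]
    exact (Nat.cast_sum _ _).symm
  have hpart2 : ∑ j ∈ Finset.Ico (K+1) k, (L j : ℝ) * (1/(j+1))
      ≤ (1/((K:ℝ)+2)) * N := by
    have step1 : ∑ j ∈ Finset.Ico (K+1) k, (L j : ℝ) * (1/(j+1))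
        ≤ ∑ j ∈ Finset.Ico (K+1) k, (L j : ℝ) * (1/((K:ℝ)+2)) := by
      refine Finset.sum_le_sum fun j hj => ?_
      have hjK : K + 1 ≤ j := (Finset.mem_Ico.mp hj).1
      have : ((K:ℝ)+2) ≤ (j:ℝ)+1 := by
        have : (K+1:ℕ) ≤ j := hjK
        have : ((K:ℝ)+1) ≤ j := by exact_mod_cast this
        linarith
      have h12 : (1:ℝ)/((j:ℝ)+1) ≤ 1/((K:ℝ)+2) :=
        one_div_le_one_div_of_le (by positivity) (by linarith)
      have h13 : (0:ℝ) ≤ (L j : ℝ) := Nat.cast_nonneg _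
      nlinarith
    refine step1.trans ?_
    rw [← Finset.sum_mul]
    have hsumL : ∑ j ∈ Finset.Ico (K+1) k, (L j : ℝ) ≤ (N:ℝ) := by
      have h8 : ∑ j ∈ Finset.Ico (K+1) k, L j ≤ S k := by
        rw [hSdef]; beta_reduce; rw [range_eq_Ico]
        exact Finset.sum_le_sum_of_subset (Finset.Ico_subset_Ico (Nat.zero_le _) le_rfl)
      have h9 : S k ≤ N := hB1 N
      have : ∑ j ∈ Finset.Ico (K+1) k, L j ≤ N := le_trans h8 h9
      calc ∑ j ∈ Finset.Ico (K+1) k, (L j : ℝ)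
          = ((∑ j ∈ Finset.Ico (K+1) k, L j : ℕ) : ℝ) := by push_cast [Nat.cast_sum]; ring
        _ ≤ (N:ℝ) := by exact_mod_cast this
    calc (∑ j ∈ Finset.Ico (K+1) k, (L j : ℝ)) * (1/((K:ℝ)+2))
        ≤ (N:ℝ) * (1/((K:ℝ)+2)) := by
          gcongr
      _ = (1/((K:ℝ)+2)) * N := by ring
  have hterm1 : (N:ℝ)⁻¹ * (∑ j ∈ range k, (L j : ℝ) * (1/(j+1))) < ε/8 + ε/8 := by
    have hb : (N:ℝ)⁻¹ * (∑ j ∈ range k, (L j : ℝ) * (1/(j+1)))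
        ≤ (N:ℝ)⁻¹ * ((S (K+1) : ℝ) + (1/((K:ℝ)+2)) * N) := by
      gcongr
      rw [hsplit]
      exact add_le_add hpart1 hpart2
    refine hb.trans_lt ?_
    rw [mul_add]
    have hc1 : (N:ℝ)⁻¹ * (S (K+1) : ℝ) < ε/8 := by
      rw [div_lt_iff₀ hε] at hN₁
      have hNb : 8 * ((S (K+1) : ℝ) + 1) < ε * N := by
        have : (N₁:ℝ) < N := by exact_mod_cast hNN₁
        nlinarith
      rw [show (N:ℝ)⁻¹ * (S (K+1):ℝ) = (S (K+1):ℝ)/N by ring, div_lt_iff₀ hNR]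
      nlinarith
    have hc2 : (N:ℝ)⁻¹ * ((1/((K:ℝ)+2)) * N) ≤ ε/8 := by
      rw [show (N:ℝ)⁻¹ * ((1/((K:ℝ)+2)) * N) = (N * (N:ℝ)⁻¹) * (1/((K:ℝ)+2)) by ring,
        mul_inv_cancel₀ hNR.ne', one_mul]
      have : 1/((K:ℝ)+2) ≤ 1/((K:ℝ)+1) :=
        one_div_le_one_div_of_le (by positivity) (by linarith)
      linarith
    linarith
  have hfinal := add_lt_add (add_lt_add_of_lt_of_lt hterm1 hterm2)
    (lt_of_le_of_lt hterm3 hterm3')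
  rw [← hk]
  calc (N:ℝ)⁻¹ * (∑ j ∈ range k, (L j : ℝ) * (1/(j+1))) + 1/((k:ℝ)+1)
        + (N:ℝ)⁻¹ * ((D k : ℝ) * (2*M))
      < (ε/8 + ε/8 + ε/8) + ε/4 := by linarith
    _ ≤ ε := by linarith
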